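/- arXiv:2404.01798 — 2 statements merged into one kernel-verified Lean document; each statement's English description precedes it below -/
import Mathlib

section
/- Let p ∈ ℂ[X] be a monic polynomial of degree n ≥ 1, let k, b ∈ ℂ with k ≠ 0, and set q = C(kⁿ) · (p.comp(C(k⁻¹) · (X − C b))) ∈ ℂ[X]. If u : ℂ → ℂ is infinitely differentiable and satisfies Σ_{j=0}^{n} pⱼ · u⁽ʲ⁾(t) = 0 for all t ∈ ℂ, then the function v(t) = exp(b·t) · u(k·t) satisfies Σ_{j=0}^{n} qⱼ · v⁽ʲ⁾(t) = 0 for all t ∈ ℂ, where pⱼ, qⱼ denote the coefficients of Xʲ in p and q respectively. Moreover q is monic of degree n. -/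
open Polynomial
open Finset

private lemma exp_mul_leibniz (b : ℂ) (w : ℂ → ℂ) (hw : ContDiff ℂ ⊤ w) (j : ℕ) :
    ∀ t : ℂ, iteratedDeriv j (fun s => Complex.exp (b * s) * w s) t
      = Complex.exp (b * t) * ∑ i ∈ range (j + 1),
          (j.choose i : ℂ) * b ^ (j - i) * iteratedDeriv i w t := by
  induction j with
  | zero => intro t; simp
  | succ j ih =>
    intro t
    have hdiff : ∀ i : ℕ, Differentiable ℂ (iteratedDeriv i w) := fun i =>
      hw.differentiable_iteratedDeriv i (by exact_mod_cast lt_top_iff_ne_top.mpr (by simp))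
    -- derivative of the sum
    have hS : HasDerivAt (fun t => ∑ i ∈ range (j + 1),
          (j.choose i : ℂ) * b ^ (j - i) * iteratedDeriv i w t)
        (∑ i ∈ range (j + 1),
          (j.choose i : ℂ) * b ^ (j - i) * iteratedDeriv (i + 1) w t) t := by
      refine HasDerivAt.fun_sum fun i _ => ?_
      have := ((hdiff i t).hasDerivAt).const_mul ((j.choose i : ℂ) * b ^ (j - i))
      simpa [iteratedDeriv_succ] using this
    have hE : HasDerivAt (fun t : ℂ => Complex.exp (b * t)) (Complex.exp (b * t) * b) t := by
      have h1 : HasDerivAt (fun t : ℂ => b * t) b t := by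
        simpa using (hasDerivAt_id t).const_mul b
      exact (Complex.hasDerivAt_exp (b * t)).comp t h1
    have hmul : HasDerivAt (fun t => Complex.exp (b * t) * ∑ i ∈ range (j + 1),
        (j.choose i : ℂ) * b ^ (j - i) * iteratedDeriv i w t) _ t := hE.mul hS
    have heq : iteratedDeriv j (fun s => Complex.exp (b * s) * w s)
        = fun t => Complex.exp (b * t) * ∑ i ∈ range (j + 1),
          (j.choose i : ℂ) * b ^ (j - i) * iteratedDeriv i w t := funext ih
    rw [iteratedDeriv_succ, heq, hmul.deriv]
    -- b * S + S' = S (succ)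
    have key : b * (∑ i ∈ range (j + 1), (j.choose i : ℂ) * b ^ (j - i) * iteratedDeriv i w t)
        + ∑ i ∈ range (j + 1), (j.choose i : ℂ) * b ^ (j - i) * iteratedDeriv (i + 1) w t
        = ∑ i ∈ range (j + 2), ((j+1).choose i : ℂ) * b ^ (j + 1 - i) * iteratedDeriv i w t := by
      rw [Finset.mul_sum]
      rw [Finset.sum_range_succ' (fun i => ((j+1).choose i : ℂ) * b ^ (j + 1 - i) * iteratedDeriv i w t)]
      have pascal : ∀ i, ((j+1).choose (i+1) : ℂ) = (j.choose i : ℂ) + (j.choose (i+1) : ℂ) := by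
        intro i; exact_mod_cast congrArg (Nat.cast (R := ℂ)) (Nat.choose_succ_succ j i)
      have hsplit : ∑ i ∈ range (j + 1), ((j+1).choose (i+1) : ℂ) * b ^ (j + 1 - (i+1)) * iteratedDeriv (i+1) w t
          = (∑ i ∈ range (j + 1), (j.choose i : ℂ) * b ^ (j - i) * iteratedDeriv (i+1) w t)
            + ∑ i ∈ range (j + 1), (j.choose (i+1) : ℂ) * b ^ (j - i) * iteratedDeriv (i+1) w t := by
        rw [← Finset.sum_add_distrib]
        refine Finset.sum_congr rfl fun i hi => ?_
        rw [pascal i]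
        have : j + 1 - (i + 1) = j - i := by omega
        rw [this]; ring
      rw [hsplit]
      -- left side: b * sum, peel the i = 0 term
      have hleft : ∑ i ∈ range (j + 1), b * ((j.choose i : ℂ) * b ^ (j - i) * iteratedDeriv i w t)
          = (∑ i ∈ range j, (j.choose (i+1) : ℂ) * b ^ (j - i) * iteratedDeriv (i+1) w t)
            + ((j+1).choose 0 : ℂ) * b ^ (j + 1 - 0) * iteratedDeriv 0 w t := by
        rw [Finset.sum_range_succ' (fun i => b * ((j.choose i : ℂ) * b ^ (j - i) * iteratedDeriv i w t))]
        congr 1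
        · refine Finset.sum_congr rfl fun i hi => ?_
          have hi' : i < j := Finset.mem_range.mp hi
          have : j - i = (j - (i+1)) + 1 := by omega
          rw [this]; ring
        · simp [pow_succ]; ring
      rw [hleft]
      have hdrop : ∑ i ∈ range (j + 1), (j.choose (i+1) : ℂ) * b ^ (j - i) * iteratedDeriv (i+1) w t
          = ∑ i ∈ range j, (j.choose (i+1) : ℂ) * b ^ (j - i) * iteratedDeriv (i+1) w t := by
        rw [Finset.sum_range_succ]
        simp [Nat.choose_succ_self]
      rw [hdrop]
      ring
    rw [← key]; ring

private lemma comp_C_mul_X_coeff (p : ℂ[X]) (c : ℂ) (n i : ℕ) (hdeg : p.natDegree = n)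
    (hi : i ∈ Finset.range (n + 1)) :
    (p.comp (C c * X)).coeff i = c ^ i * p.coeff i := by
  rw [Polynomial.comp, eval₂_eq_sum_range' C (by omega : p.natDegree < n + 1) (C c * X),
    finset_sum_coeff]
  have : ∀ j ∈ Finset.range (n + 1),
      (C (p.coeff j) * (C c * X) ^ j).coeff i
        = if i = j then c ^ i * p.coeff i else 0 := by
    intro j _
    rw [mul_pow, ← C_pow, ← mul_assoc, ← C_mul, coeff_C_mul, coeff_X_pow]
    split_ifs with h
    · subst h; ring
    · ring
  rw [Finset.sum_congr rfl this, Finset.sum_ite_eq (Finset.range (n + 1)) i]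
  simp [Finset.mem_range.mp hi]


/-- The equivalence transformation `v(t) = exp (b t) · u (k t)` maps solutions of the
constant-coefficient linear ODE with characteristic polynomial `p` to solutions of the
ODE with characteristic polynomial `q = kⁿ · p ((X - b)/k)`, and `q` is again monic of
degree `n`. -/
theorem transformed_solution_solves_transformed_ode
    (p : ℂ[X]) (n : ℕ) (hn : 1 ≤ n) (hmonic : p.Monic) (hdeg : p.natDegree = n)
    (k b : ℂ) (hk : k ≠ 0)
    (q : ℂ[X]) (hq : q = C (k ^ n) * p.comp (C k⁻¹ * (X - C b)))
    (u : ℂ → ℂ) (hu : ContDiff ℂ ⊤ u)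
    (hode : ∀ t : ℂ,
      ∑ j ∈ Finset.range (n + 1), p.coeff j * iteratedDeriv j u t = 0) :
    (∀ t : ℂ,
      ∑ j ∈ Finset.range (n + 1),
        q.coeff j * iteratedDeriv j (fun s : ℂ => Complex.exp (b * s) * u (k * s)) t = 0)
    ∧ q.Monic ∧ q.natDegree = n := by
  have hk' : k⁻¹ ≠ 0 := inv_ne_zero hk
  set g : ℂ[X] := C k⁻¹ * (X - C b) with hg
  have hg1 : g.natDegree = 1 := by
    rw [hg, natDegree_C_mul hk', natDegree_X_sub_C]
  have hglc : g.leadingCoeff = k⁻¹ := by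
    rw [hg, leadingCoeff_mul, leadingCoeff_C, leadingCoeff_X_sub_C, mul_one]
  have hqdeg : q.natDegree = n := by
    rw [hq, natDegree_C_mul (pow_ne_zero n hk), natDegree_comp, hg1, hdeg, mul_one]
  have hqmonic : q.Monic := by
    have : q.leadingCoeff = 1 := by
      rw [hq, leadingCoeff_mul, leadingCoeff_C, leadingCoeff_comp (by rw [hg1]; omega),
        hmonic.leadingCoeff, hglc, one_mul, hdeg, ← mul_pow, mul_inv_cancel₀ hk, one_pow]
    exact this
  refine ⟨?_, hqmonic, hqdeg⟩
  -- the analytic part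
  have hr : q.comp (X + C b) = C (k ^ n) * p.comp (C k⁻¹ * X) := by
    rw [hq, mul_comp, C_comp, comp_assoc]
    congr 2
    simp [hg, mul_comp, sub_comp]
  have hcoeff : ∀ i ∈ Finset.range (n + 1),
      (q.comp (X + C b)).coeff i = k ^ n * ((k⁻¹) ^ i * p.coeff i) := by
    intro i hi
    rw [hr, coeff_C_mul, comp_C_mul_X_coeff p k⁻¹ n i hdeg hi]
  have hsum : ∀ i : ℕ, ∑ j ∈ Finset.range (n + 1),
      q.coeff j * ((j.choose i : ℂ) * b ^ (j - i)) = (q.comp (X + C b)).coeff i := by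
    intro i
    rw [Polynomial.comp, eval₂_eq_sum_range' C (by omega : q.natDegree < n + 1) (X + C b),
      finset_sum_coeff]
    refine Finset.sum_congr rfl fun j _ => ?_
    rw [coeff_C_mul, coeff_X_add_C_pow]
    ring
  intro t
  set w : ℂ → ℂ := fun s => u (k * s) with hw_def
  have hw : ContDiff ℂ ⊤ w :=
    hu.comp ((contDiff_const.mul contDiff_id : ContDiff ℂ ⊤ fun s : ℂ => k * s))
  have hwderiv : ∀ i : ℕ, ∀ s : ℂ, iteratedDeriv i w s = k ^ i * iteratedDeriv i u (k * s) := by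
    intro i s
    have := iteratedDeriv_comp_const_mul (f := u) (n := i) (hu.of_le le_top) k
    exact congrFun this s
  have hv : (fun s : ℂ => Complex.exp (b * s) * u (k * s))
      = fun s => Complex.exp (b * s) * w s := rfl
  rw [hv]
  calc ∑ j ∈ Finset.range (n + 1),
        q.coeff j * iteratedDeriv j (fun s => Complex.exp (b * s) * w s) t
      = ∑ j ∈ Finset.range (n + 1), ∑ i ∈ Finset.range (n + 1),
          q.coeff j * ((j.choose i : ℂ) * b ^ (j - i))
            * (Complex.exp (b * t) * iteratedDeriv i w t) := by
        refine Finset.sum_congr rfl fun j hj => ?_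
        rw [exp_mul_leibniz b w hw j t]
        have hext : ∑ i ∈ Finset.range (j + 1),
              (j.choose i : ℂ) * b ^ (j - i) * iteratedDeriv i w t
            = ∑ i ∈ Finset.range (n + 1),
              (j.choose i : ℂ) * b ^ (j - i) * iteratedDeriv i w t := by
          refine Finset.sum_subset (Finset.range_subset_range.mpr (by
            have := Finset.mem_range.mp hj; omega)) fun i _ hi => ?_
          have : j < i := by
            simp only [Finset.mem_range, not_lt] at hi; omega
          simp [Nat.choose_eq_zero_of_lt this]
        rw [hext, Finset.mul_sum, Finset.mul_sum]
        refine Finset.sum_congr rfl fun i _ => ?_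
        ring
    _ = ∑ i ∈ Finset.range (n + 1),
          (q.comp (X + C b)).coeff i * (Complex.exp (b * t) * iteratedDeriv i w t) := by
        rw [Finset.sum_comm]
        refine Finset.sum_congr rfl fun i _ => ?_
        rw [← hsum i, Finset.sum_mul]
    _ = Complex.exp (b * t) * k ^ n
          * ∑ i ∈ Finset.range (n + 1), p.coeff i * iteratedDeriv i u (k * t) := by
        rw [Finset.mul_sum]
        refine Finset.sum_congr rfl fun i hi => ?_
        rw [hcoeff i hi, hwderiv i t]
        have : (k⁻¹) ^ i * k ^ i = 1 := by
          rw [← mul_pow, inv_mul_cancel₀ hk, one_pow]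
        field_simp
        linear_combination (p.coeff i * iteratedDeriv i u (k * t)) * this
    _ = 0 := by rw [hode (k * t), mul_zero]
end

section
/- Let s ∈ ℕ with s ≥ 1, let λ : Fin s → ℂ be injective, let m : Fin s → ℕ with m i ≥ 1 for all i, let n = Σ_i m i, and let p = ∏_i (X − C(λ i))^{m i} ∈ ℂ[X]. If u : ℝ → ℂ is n-times continuously differentiable and satisfies Σ_{k=0}^{n} pₖ · u⁽ᵏ⁾(x) = 0 for all x ∈ ℝ (pₖ the coefficient of Xᵏ in p, u⁽ᵏ⁾ the k-th iterated derivative), then u lies in the ℂ-linear span of the functions {x ↦ xʲ · exp(λ i · x) : i : Fin s, j < m i}. -/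
open Polynomial

noncomputable def efun (c : ℂ) (j : ℕ) : ℝ → ℂ := fun x => (x : ℂ) ^ j * Complex.exp (c * x)

lemma efun_hasDerivAt (c : ℂ) (j : ℕ) (x : ℝ) :
    HasDerivAt (efun c j) ((j : ℂ) * (x : ℂ) ^ (j - 1) * Complex.exp (c * x) + c * efun c j x) x := by
  have h2 : HasDerivAt (fun y : ℝ => (y : ℂ) ^ j) ((j : ℂ) * (x : ℂ) ^ (j - 1)) x :=
    (hasDerivAt_pow j (x : ℂ)).comp_ofReal
  have h3 : HasDerivAt (fun y : ℝ => Complex.exp (c * y)) (c * Complex.exp (c * x)) x := by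
    simpa [mul_comm] using (((hasDerivAt_id (x : ℂ)).const_mul c).cexp).comp_ofReal
  have := h2.fun_mul h3
  refine this.congr_deriv ?_
  simp [efun]; ring

lemma efun_differentiable (c : ℂ) (j : ℕ) : Differentiable ℝ (efun c j) :=
  fun x => (efun_hasDerivAt c j x).differentiableAt

lemma homog (c : ℂ) (u : ℝ → ℂ) (hu : Differentiable ℝ u)
    (h : ∀ x, deriv u x = c * u x) (x : ℝ) : u x = u 0 * Complex.exp (c * x) := by
  set g : ℝ → ℂ := fun x => Complex.exp (-c * x) * u x with hg
  have hexp : ∀ y : ℝ, HasDerivAt (fun y : ℝ => Complex.exp (-c * y)) (-c * Complex.exp (-c * y)) y := by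
    intro y
    simpa [mul_comm] using (((hasDerivAt_id (y : ℂ)).const_mul (-c)).cexp).comp_ofReal
  have hgd : ∀ y, HasDerivAt g 0 y := by
    intro y
    have := (hexp y).fun_mul (hu y).hasDerivAt
    rw [h y] at this
    refine this.congr_deriv ?_
    ring
  have hconst : ∀ y, g y = g 0 :=
    fun y => is_const_of_deriv_eq_zero (fun z => (hgd z).differentiableAt)
      (fun z => (hgd z).deriv) y 0
  have h0 : g 0 = u 0 := by simp [hg]
  have := hconst x
  rw [h0, hg] at this
  have h2 := congrArg (fun z => Complex.exp (c * x) * z) this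
  simp only [← mul_assoc, ← Complex.exp_add] at h2
  rw [mul_comm]; simpa using h2

lemma solve_eq (c : ℂ) (j : ℕ) (x : ℝ) :
    deriv (fun y => ((j + 1 : ℂ))⁻¹ * efun c (j + 1) y) x
      - c * (((j + 1 : ℂ))⁻¹ * efun c (j + 1) x) = efun c j x := by
  have hd := ((efun_hasDerivAt c (j + 1) x).const_mul ((j + 1 : ℂ))⁻¹).deriv
  rw [hd]
  have hj : ((j : ℂ) + 1) ≠ 0 := Nat.cast_add_one_ne_zero j
  simp only [efun, Nat.add_sub_cancel, Nat.cast_add, Nat.cast_one]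
  field_simp
  ring

lemma solve_ne (c μ : ℂ) (hne : μ ≠ c) (j : ℕ) :
    ∃ w : ℝ → ℂ, w ∈ Submodule.span ℂ {f : ℝ → ℂ | ∃ t ≤ j, f = efun μ t} ∧
      Differentiable ℝ w ∧ ∀ x, deriv w x - c * w x = efun μ j x := by
  induction j with
  | zero =>
    refine ⟨fun y => (μ - c)⁻¹ * efun μ 0 y, ?_, (efun_differentiable μ 0).const_mul _, ?_⟩
    · have : (fun y => (μ - c)⁻¹ * efun μ 0 y) = (μ - c)⁻¹ • efun μ 0 := rfl
      rw [this]
      exact Submodule.smul_mem _ _ (Submodule.subset_span ⟨0, le_refl 0, rfl⟩)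
    · intro x
      rw [((efun_hasDerivAt μ 0 x).const_mul ((μ - c)⁻¹)).deriv]
      have hsc : μ - c ≠ 0 := sub_ne_zero.mpr hne
      simp only [Nat.cast_zero, zero_mul, zero_add]
      field_simp
  | succ j ih =>
    obtain ⟨w1, hw1mem, hw1d, hw1⟩ := ih
    refine ⟨fun y => (μ - c)⁻¹ * efun μ (j + 1) y - (((j : ℂ) + 1) * (μ - c)⁻¹) * w1 y, ?_, ?_, ?_⟩
    · have : (fun y => (μ - c)⁻¹ * efun μ (j + 1) y - (((j : ℂ) + 1) * (μ - c)⁻¹) * w1 y)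
          = (μ - c)⁻¹ • efun μ (j + 1) - (((j : ℂ) + 1) * (μ - c)⁻¹) • w1 := rfl
      rw [this]
      apply Submodule.sub_mem
      · exact Submodule.smul_mem _ _ (Submodule.subset_span ⟨j + 1, le_refl _, rfl⟩)
      · refine Submodule.smul_mem _ _ (Submodule.span_mono ?_ hw1mem)
        rintro f ⟨t, ht, rfl⟩
        exact ⟨t, ht.trans (Nat.le_succ j), rfl⟩
    · exact ((efun_differentiable μ (j + 1)).const_mul _).sub (hw1d.const_mul _)
    · intro x
      have hsc : μ - c ≠ 0 := sub_ne_zero.mpr hne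
      have hda : HasDerivAt (fun y => (μ - c)⁻¹ * efun μ (j + 1) y)
          ((μ - c)⁻¹ * (((j : ℂ) + 1) * (x : ℂ) ^ j * Complex.exp (μ * x) + μ * efun μ (j + 1) x)) x := by
        have := (efun_hasDerivAt μ (j + 1) x).const_mul ((μ - c)⁻¹)
        simpa using this
      have hdb : HasDerivAt (fun y => (((j : ℂ) + 1) * (μ - c)⁻¹) * w1 y)
          ((((j : ℂ) + 1) * (μ - c)⁻¹) * deriv w1 x) x :=
        ((hw1d x).hasDerivAt).const_mul _
      rw [(hda.fun_sub hdb).deriv]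
      have h1 := hw1 x
      have hw1x : deriv w1 x = c * w1 x + efun μ j x := by linear_combination h1
      rw [hw1x]
      simp only [efun]
      -- (cast already normal)
      field_simp
      ring

lemma particular {s : ℕ} (l : Fin s → ℂ) (hl : Function.Injective l) (m : Fin s → ℕ)
    (i0 : Fin s) (hm0 : 1 ≤ m i0) (v : ℝ → ℂ)
    (hv : v ∈ Submodule.span ℂ
      {f : ℝ → ℂ | ∃ i j, j < Function.update m i0 (m i0 - 1) i ∧ f = efun (l i) j}) :
    ∃ w : ℝ → ℂ, w ∈ Submodule.span ℂ {f : ℝ → ℂ | ∃ i j, j < m i ∧ f = efun (l i) j} ∧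
      Differentiable ℝ w ∧ ∀ x, deriv w x - l i0 * w x = v x := by
  induction hv using Submodule.span_induction with
  | mem f hf =>
    obtain ⟨i, j, hj, rfl⟩ := hf
    by_cases hi : i = i0
    · subst hi
      rw [Function.update_self] at hj
      refine ⟨fun y => ((j + 1 : ℂ))⁻¹ * efun (l i) (j + 1) y, ?_, ?_, ?_⟩
      · have : (fun y => ((j + 1 : ℂ))⁻¹ * efun (l i) (j + 1) y)
            = ((j + 1 : ℂ))⁻¹ • efun (l i) (j + 1) := rfl
        rw [this]
        exact Submodule.smul_mem _ _ (Submodule.subset_span ⟨i, j + 1, by omega, rfl⟩)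
      · exact (efun_differentiable _ _).const_mul _
      · intro x
        exact solve_eq (l i) j x
    · have hne : l i ≠ l i0 := fun h => hi (hl h)
      rw [Function.update_of_ne hi] at hj
      obtain ⟨w, hwmem, hwd, hw⟩ := solve_ne (l i0) (l i) hne j
      refine ⟨w, Submodule.span_mono ?_ hwmem, hwd, hw⟩
      rintro f ⟨t, ht, rfl⟩
      exact ⟨i, t, lt_of_le_of_lt ht hj, rfl⟩
  | zero =>
    exact ⟨fun _ => 0, Submodule.zero_mem _, differentiable_const 0, by simp⟩
  | add v1 v2 hv1 hv2 ih1 ih2 =>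
    obtain ⟨w1, hm1, hd1, he1⟩ := ih1
    obtain ⟨w2, hm2, hd2, he2⟩ := ih2
    refine ⟨fun y => w1 y + w2 y, ?_, hd1.add hd2, ?_⟩
    · exact Submodule.add_mem _ hm1 hm2
    · intro x
      rw [((hd1 x).hasDerivAt.fun_add (hd2 x).hasDerivAt).deriv]
      have := he1 x; have := he2 x
      simp only [Pi.add_apply]
      linear_combination he1 x + he2 x
  | smul a v1 hv1 ih =>
    obtain ⟨w1, hm1, hd1, he1⟩ := ih
    refine ⟨fun y => a * w1 y, ?_, hd1.const_mul a, ?_⟩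
    · have : (fun y => a * w1 y) = a • w1 := rfl
      rw [this]
      exact Submodule.smul_mem _ _ hm1
    · intro x
      rw [((hd1 x).hasDerivAt.const_mul a).deriv]
      simp only [Pi.smul_apply, smul_eq_mul]
      linear_combination a * he1 x

lemma iteratedDeriv_v (c : ℂ) (u : ℝ → ℂ) {N k : ℕ} (hu : ContDiff ℝ (N + 1) u)
    (hk : k ≤ N) (x : ℝ) :
    iteratedDeriv k (fun y => deriv u y - c * u y) x
      = iteratedDeriv (k + 1) u x - c * iteratedDeriv k u x := by
  have hcast : ContDiff ℝ ((N : WithTop ℕ∞) + 1) u := by exact_mod_cast hu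
  have hd : ContDiff ℝ (N : WithTop ℕ∞) (deriv u) :=
    (contDiff_succ_iff_deriv.mp hcast).2.2
  have hkN : (k : WithTop ℕ∞) ≤ (N : WithTop ℕ∞) := by exact_mod_cast hk
  have hdk : ContDiff ℝ (k : WithTop ℕ∞) (deriv u) := hd.of_le hkN
  have huk : ContDiff ℝ (k : WithTop ℕ∞) u := hcast.of_le (le_trans hkN le_self_add)
  have heq : (fun y => deriv u y - c * u y) = deriv u - c • u := by
    funext y; simp [Pi.smul_apply, smul_eq_mul]
  rw [heq]
  rw [← iteratedDerivWithin_univ, ← iteratedDerivWithin_univ, ← iteratedDerivWithin_univ]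
  have hsm : ContDiff ℝ (k : WithTop ℕ∞) (c • u) := huk.const_smul c
  rw [iteratedDerivWithin_sub (Set.mem_univ x) uniqueDiffOn_univ hdk.contDiffWithinAt
    hsm.contDiffWithinAt]
  rw [iteratedDerivWithin_const_smul (Set.mem_univ x) uniqueDiffOn_univ c huk.contDiffWithinAt]
  simp only [iteratedDerivWithin_univ, smul_eq_mul]
  rw [← iteratedDeriv_succ']

lemma ode_factor_sum (c : ℂ) (q : ℂ[X]) (N : ℕ) (hq : q.natDegree ≤ N) (u : ℝ → ℂ)
    (hu : ContDiff ℝ (N + 1) u) (x : ℝ) :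
    ∑ k ∈ Finset.range (N + 2), ((X - C c) * q).coeff k * iteratedDeriv k u x
      = ∑ k ∈ Finset.range (N + 1), q.coeff k *
          iteratedDeriv k (fun y => deriv u y - c * u y) x := by
  have hL : ∑ k ∈ Finset.range (N + 2), ((X - C c) * q).coeff k * iteratedDeriv k u x
      = (∑ k ∈ Finset.range (N + 2), (X * q).coeff k * iteratedDeriv k u x)
        - ∑ k ∈ Finset.range (N + 2), c * (q.coeff k * iteratedDeriv k u x) := by
    rw [← Finset.sum_sub_distrib]
    apply Finset.sum_congr rfl
    intro k _
    rw [sub_mul, coeff_sub, coeff_C_mul]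
    ring
  have hA : ∑ k ∈ Finset.range (N + 2), (X * q).coeff k * iteratedDeriv k u x
      = ∑ k ∈ Finset.range (N + 1), q.coeff k * iteratedDeriv (k + 1) u x := by
    rw [show N + 2 = N + 1 + 1 by omega,
      Finset.sum_range_succ']
    simp [coeff_X_mul, mul_coeff_zero]
  have hB : ∑ k ∈ Finset.range (N + 2), c * (q.coeff k * iteratedDeriv k u x)
      = ∑ k ∈ Finset.range (N + 1), c * (q.coeff k * iteratedDeriv k u x) := by
    rw [Finset.sum_range_succ]
    rw [coeff_eq_zero_of_natDegree_lt (lt_of_le_of_lt hq (Nat.lt_succ_self N))]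
    simp
  rw [hL, hA, hB, ← Finset.sum_sub_distrib]
  apply Finset.sum_congr rfl
  intro k hk
  rw [iteratedDeriv_v c u hu (Nat.lt_succ_iff.mp (Finset.mem_range.mp hk)) x]
  ring

lemma main_induction {s : ℕ} (l : Fin s → ℂ) (hl : Function.Injective l) :
    ∀ n : ℕ, ∀ m : Fin s → ℕ, n = ∑ i, m i →
      ∀ u : ℝ → ℂ, ContDiff ℝ n u →
      (∀ x : ℝ, ∑ k ∈ Finset.range (n + 1),
          (∏ i, (X - C (l i)) ^ m i).coeff k * iteratedDeriv k u x = 0) →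
      u ∈ Submodule.span ℂ {f : ℝ → ℂ | ∃ i j, j < m i ∧ f = efun (l i) j} := by
  intro n
  induction n with
  | zero =>
    intro m hn u hu hode
    have hm : ∀ i, m i = 0 := by
      intro i
      have := (Finset.sum_eq_zero_iff.mp hn.symm) i (Finset.mem_univ i)
      exact this
    have hp1 : (∏ i, (X - C (l i)) ^ m i) = 1 := by
      apply Finset.prod_eq_one
      intro i _
      rw [hm i, pow_zero]
    have hu0 : u = 0 := by
      funext x
      have := hode x
      rw [hp1] at this
      simpa using this
    rw [hu0]
    exact Submodule.zero_mem _
  | succ n' ih =>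
    intro m hn u hu hode
    have hsum : 0 < ∑ i, m i := by omega
    obtain ⟨i0, -, hi0⟩ := Finset.exists_ne_zero_of_sum_ne_zero (by omega :
      ∑ i, m i ≠ 0)
    have hm0 : 0 < m i0 := Nat.pos_of_ne_zero hi0
    set m' : Fin s → ℕ := Function.update m i0 (m i0 - 1) with hm'def
    have hsum' : n' = ∑ i, m' i := by
      have e1 : ∑ i, m' i = (m i0 - 1) + ∑ i ∈ Finset.univ \ {i0}, m i :=
        Finset.sum_update_of_mem (Finset.mem_univ i0) m (m i0 - 1)
      have e2 : ∑ i ∈ Finset.univ \ {i0}, m i = ∑ i ∈ Finset.univ.erase i0, m i := by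
        rw [Finset.sdiff_singleton_eq_erase]
      have e3 : m i0 + ∑ i ∈ Finset.univ.erase i0, m i = ∑ i, m i :=
        Finset.add_sum_erase _ m (Finset.mem_univ i0)
      omega
    set q : ℂ[X] := ∏ i, (X - C (l i)) ^ m' i with hqdef
    have hfac : ∏ i, (X - C (l i)) ^ m i = (X - C (l i0)) * q := by
      rw [hqdef]
      rw [← Finset.mul_prod_erase Finset.univ _ (Finset.mem_univ i0),
        ← Finset.mul_prod_erase Finset.univ (fun i => (X - C (l i)) ^ m' i)
          (Finset.mem_univ i0)]
      have heq : ∏ i ∈ Finset.univ.erase i0, (X - C (l i)) ^ m i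
          = ∏ i ∈ Finset.univ.erase i0, (X - C (l i)) ^ m' i :=
        Finset.prod_congr rfl fun i hi => by
          rw [hm'def, Function.update_of_ne (Finset.ne_of_mem_erase hi)]
      rw [heq, hm'def, Function.update_self, ← mul_assoc, ← pow_succ']
      congr 2
      omega
    have hqdeg : q.natDegree = n' := by
      rw [hqdef, Polynomial.natDegree_prod _ _ (fun i _ =>
        pow_ne_zero _ (X_sub_C_ne_zero (l i)))]
      simp only [natDegree_pow, natDegree_X_sub_C, mul_one]
      exact hsum'.symm
    have hu' : ContDiff ℝ (n' + 1 : ℕ) u := hu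
    have hcast : ContDiff ℝ ((n' : WithTop ℕ∞) + 1) u := by exact_mod_cast hu
    have hdiff : Differentiable ℝ u := (contDiff_succ_iff_deriv.mp hcast).1
    have hd : ContDiff ℝ (n' : WithTop ℕ∞) (deriv u) :=
      (contDiff_succ_iff_deriv.mp hcast).2.2
    set v : ℝ → ℂ := fun y => deriv u y - l i0 * u y with hvdef
    have hv : ContDiff ℝ (n' : ℕ) v :=
      hd.sub (contDiff_const.mul (hcast.of_le le_self_add))
    have hodev : ∀ x : ℝ, ∑ k ∈ Finset.range (n' + 1),
        q.coeff k * iteratedDeriv k v x = 0 := by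
      intro x
      have h0 := hode x
      rw [hfac, show n' + 1 + 1 = n' + 2 from rfl] at h0
      rw [hvdef, ← ode_factor_sum (l i0) q n' (le_of_eq hqdeg) u hu' x]
      exact h0
    have hvmem := ih m' hsum' v hv hodev
    obtain ⟨w, hwmem, hwd, hw⟩ := particular l hl m i0 hm0 v hvmem
    set g : ℝ → ℂ := fun y => u y - w y with hgdef
    have hgd : Differentiable ℝ g := hdiff.sub hwd
    have hgode : ∀ x, deriv g x = l i0 * g x := by
      intro x
      have hdg : deriv g x = deriv u x - deriv w x :=
        (((hdiff x).hasDerivAt).sub ((hwd x).hasDerivAt)).deriv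
      have h1 := hw x
      simp only [hvdef] at h1
      rw [hdg]
      show deriv u x - deriv w x = l i0 * (u x - w x)
      linear_combination -h1
    have hgh := homog (l i0) g hgd hgode
    have hurep : u = fun y => w y + g 0 * efun (l i0) 0 y := by
      funext y
      have := hgh y
      simp only [hgdef, efun, pow_zero, one_mul] at this ⊢
      linear_combination this
    rw [hurep]
    have hrw : (fun y => w y + g 0 * efun (l i0) 0 y) = w + g 0 • efun (l i0) 0 := rfl
    rw [hrw]
    exact Submodule.add_mem _ hwmem
      (Submodule.smul_mem _ _ (Submodule.subset_span ⟨i0, 0, hm0, rfl⟩))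

/-- Every sufficiently smooth real-variable solution of the constant-coefficient
linear ODE with characteristic polynomial `p = ∏ᵢ (X - λᵢ)^{mᵢ}` (the `λᵢ` pairwise
distinct, `mᵢ ≥ 1`, `n = ∑ mᵢ`) is a ℂ-linear combination of the fundamental
solutions `x ↦ xʲ exp (λᵢ x)` with `j < mᵢ`. -/
theorem solution_mem_span_fundamental_solutions
    (s : ℕ) (hs : 1 ≤ s) (l : Fin s → ℂ) (hl : Function.Injective l)
    (m : Fin s → ℕ) (hm : ∀ i, 1 ≤ m i)
    (n : ℕ) (hn : n = ∑ i, m i)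
    (p : ℂ[X]) (hp : p = ∏ i : Fin s, (X - C (l i)) ^ (m i))
    (u : ℝ → ℂ) (hu : ContDiff ℝ n u)
    (hode : ∀ x : ℝ,
      ∑ k ∈ Finset.range (n + 1), p.coeff k * iteratedDeriv k u x = 0) :
    u ∈ Submodule.span ℂ
      (Set.range (fun q : Σ i : Fin s, Fin (m i) =>
        (fun x : ℝ => (x : ℂ) ^ (q.2 : ℕ) * Complex.exp (l q.1 * x)))) := by
  have hset : Set.range (fun q : Σ i : Fin s, Fin (m i) =>
      (fun x : ℝ => (x : ℂ) ^ (q.2 : ℕ) * Complex.exp (l q.1 * x)))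
      = {f : ℝ → ℂ | ∃ i j, j < m i ∧ f = efun (l i) j} := by
    ext f
    constructor
    · rintro ⟨⟨i, j⟩, rfl⟩
      exact ⟨i, j, j.isLt, rfl⟩
    · rintro ⟨i, j, hj, rfl⟩
      exact ⟨⟨i, ⟨j, hj⟩⟩, rfl⟩
  rw [hset]
  subst hp
  exact main_induction l hl n m hn u hu hode
end
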